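/- arXiv:0710.2266 — 4 statements merged into one kernel-verified Lean document; each statement's English description precedes it below -/
import Mathlib

section
/- If J₊ and J₋ are two almost complex structures on a 4-dimensional real vector space V compatible with an inner product g and inducing the same orientation, then J₊J₋ + J₋J₊ = -2p·Id, where p = -(1/4)·trace(J₊J₋). -/
open scoped RealInnerProductSpace

/-- A `g`-compatible complex structure `J` on an oriented `4`-dimensional real inner
product space `V` *induces the orientation* `o` if there is a positively oriented
orthonormal basis of the form `(e, Je, f, Jf)`.  (This is the standard description of
the orientation induced by the volume form of the fundamental `2`-form
`F(·,·) = g(J·,·)`.) -/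
def InducesOrientation {V : Type*} [NormedAddCommGroup V] [InnerProductSpace ℝ V]
    (o : Orientation ℝ V (Fin 4)) (J : V →ₗ[ℝ] V) : Prop :=
  ∃ b : OrthonormalBasis (Fin 4) ℝ V,
    b.toBasis.orientation = o ∧ J (b 0) = b 1 ∧ J (b 2) = b 3

namespace Stmt0Aux

open Matrix

/-- The standard complex structure matrix on `ℝ⁴`. -/
def J0 : Matrix (Fin 4) (Fin 4) ℝ := Matrix.of fun i j =>
  if i = 1 ∧ j = 0 then 1 else if i = 0 ∧ j = 1 then -1
  else if i = 3 ∧ j = 2 then 1 else if i = 2 ∧ j = 3 then -1 else 0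

lemma J0_transpose : J0ᵀ = -J0 := by
  ext i j
  fin_cases i <;> fin_cases j <;> simp [J0]

lemma J0_sq : J0 * J0 = -1 := by
  ext i j
  fin_cases i <;> fin_cases j <;>
    simp [J0, Matrix.mul_apply, Fin.sum_univ_four, Matrix.one_apply]

set_option maxHeartbeats 1000000 in
lemma det_fin_four' (M : Matrix (Fin 4) (Fin 4) ℝ) : M.det =
    M 0 0 * (M 1 1 * (M 2 2 * M 3 3 - M 2 3 * M 3 2) - M 1 2 * (M 2 1 * M 3 3 - M 2 3 * M 3 1)
      + M 1 3 * (M 2 1 * M 3 2 - M 2 2 * M 3 1))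
    - M 0 1 * (M 1 0 * (M 2 2 * M 3 3 - M 2 3 * M 3 2) - M 1 2 * (M 2 0 * M 3 3 - M 2 3 * M 3 0)
      + M 1 3 * (M 2 0 * M 3 2 - M 2 2 * M 3 0))
    + M 0 2 * (M 1 0 * (M 2 1 * M 3 3 - M 2 3 * M 3 1) - M 1 1 * (M 2 0 * M 3 3 - M 2 3 * M 3 0)
      + M 1 3 * (M 2 0 * M 3 1 - M 2 1 * M 3 0))
    - M 0 3 * (M 1 0 * (M 2 1 * M 3 2 - M 2 2 * M 3 1) - M 1 1 * (M 2 0 * M 3 2 - M 2 2 * M 3 0)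
      + M 1 2 * (M 2 0 * M 3 1 - M 2 1 * M 3 0)) := by
  rw [det_succ_row_zero, Fin.sum_univ_four]
  simp only [det_fin_three, submatrix_apply, Fin.succAbove, Fin.castSucc, Fin.castAdd, Fin.castLE,
    Fin.lt_def, Fin.succ]
  norm_num [show ((3:Fin 4):ℕ) = 3 from rfl, show ((2:Fin 4):ℕ) = 2 from rfl,
    show (⟨2, by omega⟩ : Fin 4) = 2 from rfl, show (⟨3, by omega⟩ : Fin 4) = 3 from rfl]
  ring

set_option maxHeartbeats 1000000 in
/-- The Pfaffian of `Q * J0 * Qᵀ` equals `det Q` (a polynomial identity). -/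
lemma pf_conj (Q : Matrix (Fin 4) (Fin 4) ℝ) :
    (Q * J0 * Qᵀ) 0 1 * (Q * J0 * Qᵀ) 2 3 - (Q * J0 * Qᵀ) 0 2 * (Q * J0 * Qᵀ) 1 3
      + (Q * J0 * Qᵀ) 0 3 * (Q * J0 * Qᵀ) 1 2 = Q.det := by
  rw [det_fin_four']
  simp [Matrix.mul_apply, Fin.sum_univ_four, J0]
  ring

set_option maxHeartbeats 1000000 in
/-- Main matrix-level computation: a skew-symmetric `A` with `A² = -1` and
Pfaffian `1` anticommutes with `J0` up to the trace multiple of the identity. -/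
lemma key (A : Matrix (Fin 4) (Fin 4) ℝ) (hskew : Aᵀ = -A) (hsq : A * A = -1)
    (hpf : A 0 1 * A 2 3 - A 0 2 * A 1 3 + A 0 3 * A 1 2 = 1) (p : ℝ)
    (hp : p = -(1/4) * (J0 * A).trace) :
    J0 * A + A * J0 = (-(2 * p)) • (1 : Matrix (Fin 4) (Fin 4) ℝ) := by
  have hs : ∀ i j, A j i = -A i j := fun i j => by
    have := congrFun (congrFun hskew i) j
    simpa [Matrix.transpose_apply] using this
  have hd : ∀ i, A i i = 0 := fun i => by have := hs i i; linarith
  have h01 : A 0 1 = -A 1 0 := hs 1 0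
  have h02 : A 0 2 = -A 2 0 := hs 2 0
  have h03 : A 0 3 = -A 3 0 := hs 3 0
  have h12 : A 1 2 = -A 2 1 := hs 2 1
  have h13 : A 1 3 = -A 3 1 := hs 3 1
  have h23 : A 2 3 = -A 3 2 := hs 3 2
  have E : ∀ i j, (A * A) i j = (-1 : Matrix (Fin 4) (Fin 4) ℝ) i j := fun i j => by rw [hsq]
  have E00 := E 0 0
  have E11 := E 1 1
  have E22 := E 2 2
  have E33 := E 3 3
  simp only [Matrix.mul_apply, Fin.sum_univ_four, Matrix.neg_apply, Matrix.one_apply_eq,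
    h01, h02, h03, h12, h13, h23, hd] at E00 E11 E22 E33
  rw [h01, h02, h03, h12, h13, h23] at hpf
  have hkey : (A 1 0 - A 3 2) ^ 2 + (A 2 0 + A 3 1) ^ 2 + (A 3 0 - A 2 1) ^ 2 = 0 := by
    nlinarith [E00, E11, E22, E33, hpf]
  have h1 : A 1 0 = A 3 2 := by
    nlinarith [sq_nonneg (A 1 0 - A 3 2), sq_nonneg (A 2 0 + A 3 1), sq_nonneg (A 3 0 - A 2 1)]
  have h2 : A 2 0 = -A 3 1 := by
    nlinarith [sq_nonneg (A 1 0 - A 3 2), sq_nonneg (A 2 0 + A 3 1), sq_nonneg (A 3 0 - A 2 1)]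
  have h3 : A 3 0 = A 2 1 := by
    nlinarith [sq_nonneg (A 1 0 - A 3 2), sq_nonneg (A 2 0 + A 3 1), sq_nonneg (A 3 0 - A 2 1)]
  have htr : p = A 1 0 := by
    rw [hp]
    simp [Matrix.trace, Matrix.diag, Matrix.mul_apply, Fin.sum_univ_four, J0, h01, h23]
    linarith [h1]
  ext i j
  fin_cases i <;> fin_cases j <;>
    simp [J0, Matrix.mul_apply, Matrix.add_apply, Matrix.smul_apply, Matrix.one_apply,
      Fin.sum_univ_four, h01, h02, h03, h12, h13, h23, hd] <;>
    linarith [h1, h2, h3, htr]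

end Stmt0Aux

open Stmt0Aux Matrix

/-- If `Jp` and `Jm` are two almost complex structures on a `4`-dimensional real vector
space `V`, compatible with an inner product `g` and inducing the same orientation, then
`JpJm + JmJp = -2p·Id` where `p = -(1/4)·trace (JpJm)`. -/
theorem stmt0 {V : Type*} [NormedAddCommGroup V] [InnerProductSpace ℝ V]
    (hdim : Module.finrank ℝ V = 4) (o : Orientation ℝ V (Fin 4))
    (Jp Jm : V →ₗ[ℝ] V)
    (hJpsq : Jp ∘ₗ Jp = -LinearMap.id) (hJmsq : Jm ∘ₗ Jm = -LinearMap.id)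
    (hJpg : ∀ x y : V, ⟪Jp x, Jp y⟫ = ⟪x, y⟫)
    (hJmg : ∀ x y : V, ⟪Jm x, Jm y⟫ = ⟪x, y⟫)
    (hJpo : InducesOrientation o Jp) (hJmo : InducesOrientation o Jm)
    (p : ℝ) (hp : p = -(1/4) * LinearMap.trace ℝ V (Jp ∘ₗ Jm)) :
    Jp ∘ₗ Jm + Jm ∘ₗ Jp = (-(2 * p)) • (LinearMap.id : V →ₗ[ℝ] V) := by
  obtain ⟨bp, hbpo, hbp0, hbp2⟩ := hJpo
  obtain ⟨bm, hbmo, hbm0, hbm2⟩ := hJmo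
  have hJp2 : ∀ x, Jp (Jp x) = -x := fun x => by
    simpa using LinearMap.congr_fun hJpsq x
  have hJm2 : ∀ x, Jm (Jm x) = -x := fun x => by
    simpa using LinearMap.congr_fun hJmsq x
  have hbp1 : Jp (bp 1) = -(bp 0) := by rw [← hbp0, hJp2]
  have hbp3 : Jp (bp 3) = -(bp 2) := by rw [← hbp2, hJp2]
  have hbm1 : Jm (bm 1) = -(bm 0) := by rw [← hbm0, hJm2]
  have hbm3 : Jm (bm 3) = -(bm 2) := by rw [← hbm2, hJm2]
  have hbpon := orthonormal_iff_ite.mp bp.orthonormal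
  have hbmon := orthonormal_iff_ite.mp bm.orthonormal
  set Bp := bp.toBasis with hBp
  set Bm := bm.toBasis with hBm
  -- matrix of Jp in the basis bp is J0
  have hMp : LinearMap.toMatrix Bp Bp Jp = J0 := by
    ext i j
    rw [LinearMap.toMatrix_apply]
    fin_cases i <;> fin_cases j <;>
      simp [hBp, OrthonormalBasis.coe_toBasis_repr_apply, OrthonormalBasis.repr_apply_apply,
        hbp0, hbp1, hbp2, hbp3, hbpon, J0]
  -- matrix of Jm in the basis bm is J0
  have hMm : LinearMap.toMatrix Bm Bm Jm = J0 := by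
    ext i j
    rw [LinearMap.toMatrix_apply]
    fin_cases i <;> fin_cases j <;>
      simp [hBm, OrthonormalBasis.coe_toBasis_repr_apply, OrthonormalBasis.repr_apply_apply,
        hbm0, hbm1, hbm2, hbm3, hbmon, J0]
  set Q := Bp.toMatrix ⇑Bm with hQ
  -- Q is orthogonal
  have hQentry : ∀ i j, Q i j = ⟪bp i, bm j⟫ := fun i j => by
    rw [hQ, Module.Basis.toMatrix_apply, hBp, OrthonormalBasis.coe_toBasis_repr_apply,
      OrthonormalBasis.repr_apply_apply]
    simp [hBm]
  have hQo : Qᵀ * Q = 1 := by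
    ext j k
    simp only [Matrix.mul_apply, Matrix.transpose_apply, Matrix.one_apply, hQentry]
    calc ∑ i, ⟪bp i, bm j⟫ * ⟪bp i, bm k⟫
        = ∑ i, ⟪bm j, bp i⟫ * ⟪bp i, bm k⟫ := by
          simp_rw [real_inner_comm (bp _) (bm j)]
      _ = ⟪bm j, bm k⟫ := bp.sum_inner_mul_inner (bm j) (bm k)
      _ = if j = k then 1 else 0 := hbmon j k
  have hQQt : Q * Qᵀ = 1 := mul_eq_one_comm.mp hQo
  -- det Q = 1
  have hdet : Q.det = 1 := by
    have hpos : (0 : ℝ) < Bp.det ⇑Bm := by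
      rw [← Module.Basis.orientation_eq_iff_det_pos]
      rw [hbpo, hbmo]
    rw [Module.Basis.det_apply] at hpos
    have hsq1 : Q.det * Q.det = 1 := by
      have := congrArg Matrix.det hQo
      rwa [Matrix.det_mul, Matrix.det_transpose, Matrix.det_one] at this
    nlinarith
  -- matrix of Jm in basis bp
  have hflip : Q * Bm.toMatrix ⇑Bp = 1 := Module.Basis.toMatrix_mul_toMatrix_flip Bp Bm
  have hBmBp : Bm.toMatrix ⇑Bp = Qᵀ := by
    calc Bm.toMatrix ⇑Bp = (Qᵀ * Q) * Bm.toMatrix ⇑Bp := by rw [hQo, Matrix.one_mul]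
      _ = Qᵀ * (Q * Bm.toMatrix ⇑Bp) := by rw [Matrix.mul_assoc]
      _ = Qᵀ := by rw [hflip, Matrix.mul_one]
  have hA : LinearMap.toMatrix Bp Bp Jm = Q * J0 * Qᵀ := by
    rw [← basis_toMatrix_mul_linearMap_toMatrix_mul_basis_toMatrix Bp Bm Bp Bm Jm, hMm, hBmBp]
  -- properties of A
  have hskew : (Q * J0 * Qᵀ)ᵀ = -(Q * J0 * Qᵀ) := by
    rw [Matrix.transpose_mul, Matrix.transpose_mul, Matrix.transpose_transpose, J0_transpose]
    simp [Matrix.mul_assoc]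
  have hsq : (Q * J0 * Qᵀ) * (Q * J0 * Qᵀ) = -1 := by
    calc (Q * J0 * Qᵀ) * (Q * J0 * Qᵀ) = Q * J0 * (Qᵀ * Q) * J0 * Qᵀ := by noncomm_ring
      _ = Q * (J0 * J0) * Qᵀ := by rw [hQo]; noncomm_ring
      _ = -1 := by rw [J0_sq]; simp [hQQt]
  have hpf : (Q * J0 * Qᵀ) 0 1 * (Q * J0 * Qᵀ) 2 3 - (Q * J0 * Qᵀ) 0 2 * (Q * J0 * Qᵀ) 1 3
      + (Q * J0 * Qᵀ) 0 3 * (Q * J0 * Qᵀ) 1 2 = 1 := by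
    rw [pf_conj, hdet]
  -- trace identification
  have htr : LinearMap.trace ℝ V (Jp ∘ₗ Jm) = (J0 * (Q * J0 * Qᵀ)).trace := by
    rw [LinearMap.trace_eq_matrix_trace ℝ Bp, LinearMap.toMatrix_comp Bp Bp Bp, hMp, hA]
  -- conclude via the matrix computation
  apply (LinearMap.toMatrix Bp Bp).injective
  rw [map_add, _root_.map_smul, LinearMap.toMatrix_comp Bp Bp Bp, LinearMap.toMatrix_comp Bp Bp Bp,
    LinearMap.toMatrix_id, hMp, hA]
  exact key (Q * J0 * Qᵀ) hskew hsq hpf p (by rw [hp, htr])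
end

section
/- Let J₊, J₋ be g-orthogonal complex structures on a 4-dimensional oriented inner product space inducing the given orientation, with angle function p = -(1/4)trace(J₊J₋). Then |p| ≤ 1, and p = 1 iff J₊ = J₋, and p = -1 iff J₊ = -J₋. -/
open scoped RealInnerProductSpace

private lemma aux_le {x y z : ℝ} (h : x*x + y*y + z*z = 1) : -1 ≤ x ∧ x ≤ 1 :=
  ⟨by nlinarith [sq_nonneg (x+1), sq_nonneg y, sq_nonneg z],
   by nlinarith [sq_nonneg (x-1), sq_nonneg y, sq_nonneg z]⟩

private lemma aux_vals {a b c d e f : ℝ} (q0 : a*a + b*b + c*c = 1)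
    (q1 : a*a + d*d + e*e = 1) (q3 : c*c + e*e + f*f = 1) (h : a + f = -2) :
    a = -1 ∧ f = -1 ∧ b = 0 ∧ c = 0 ∧ d = 0 ∧ e = 0 := by
  have ha1 : a ≤ 1 := (aux_le q0).2
  have ha2 : -1 ≤ a := (aux_le q0).1
  have hf2 : -1 ≤ f := by
    have := aux_le (x := f) (y := c) (z := e) (by linarith [q3])
    exact this.1
  have ha : a = -1 := by linarith
  have hf : f = -1 := by linarith
  refine ⟨ha, hf, ?_, ?_, ?_, ?_⟩
  · have : b * b = 0 := by nlinarith [sq_nonneg c]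
    exact mul_self_eq_zero.mp this
  · have : c * c = 0 := by nlinarith [sq_nonneg b]
    exact mul_self_eq_zero.mp this
  · have : d * d = 0 := by nlinarith [sq_nonneg e]
    exact mul_self_eq_zero.mp this
  · have : e * e = 0 := by nlinarith [sq_nonneg d]
    exact mul_self_eq_zero.mp this

set_option maxHeartbeats 1000000 in
/-- For `g`-orthogonal complex structures `J₊, J₋` on a `4`-dimensional oriented inner
product space inducing the given orientation, the angle function
`p = -(1/4)·trace(J₊J₋)` satisfies `|p| ≤ 1`, with `p = 1` iff `J₊ = J₋` and
`p = -1` iff `J₊ = -J₋`. -/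
theorem stmt1 {V : Type*} [NormedAddCommGroup V] [InnerProductSpace ℝ V]
    (hdim : Module.finrank ℝ V = 4) (o : Orientation ℝ V (Fin 4))
    (Jp Jm : V →ₗ[ℝ] V)
    (hJpsq : Jp ∘ₗ Jp = -LinearMap.id) (hJmsq : Jm ∘ₗ Jm = -LinearMap.id)
    (hJpg : ∀ x y : V, ⟪Jp x, Jp y⟫ = ⟪x, y⟫)
    (hJmg : ∀ x y : V, ⟪Jm x, Jm y⟫ = ⟪x, y⟫)
    (hJpo : InducesOrientation o Jp) (hJmo : InducesOrientation o Jm)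
    (p : ℝ) (hp : p = -(1/4) * LinearMap.trace ℝ V (Jp ∘ₗ Jm)) :
    |p| ≤ 1 ∧ (p = 1 ↔ Jp = Jm) ∧ (p = -1 ↔ Jp = -Jm) := by
  obtain ⟨b, -, hb0, hb2⟩ := hJpo
  haveI : FiniteDimensional ℝ V := Module.Finite.of_basis b.toBasis
  have hJp2 : ∀ x, Jp (Jp x) = -x := by
    intro x
    have := LinearMap.ext_iff.mp hJpsq x
    simpa using this
  have hJm2 : ∀ x, Jm (Jm x) = -x := by
    intro x
    have := LinearMap.ext_iff.mp hJmsq x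
    simpa using this
  have hb1 : Jp (b 1) = -b 0 := by rw [← hb0, hJp2]
  have hb3 : Jp (b 3) = -b 2 := by rw [← hb2, hJp2]
  have horth : ∀ i j : Fin 4, ⟪b i, b j⟫ = if i = j then 1 else 0 :=
    orthonormal_iff_ite.mp b.orthonormal
  have heq : ∀ i : Fin 4, ⟪b i, b i⟫ = 1 := fun i => by rw [horth, if_pos rfl]
  have hne : ∀ i j : Fin 4, i ≠ j → ⟪b i, b j⟫ = 0 := fun i j h => by
    rw [horth, if_neg h]
  have e00 : ⟪b 0, b 0⟫ = 1 := heq 0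
  have e11 : ⟪b 1, b 1⟫ = 1 := heq 1
  have e22 : ⟪b 2, b 2⟫ = 1 := heq 2
  have e33 : ⟪b 3, b 3⟫ = 1 := heq 3
  have e01 : ⟪b 0, b 1⟫ = 0 := hne 0 1 (by decide)
  have e02 : ⟪b 0, b 2⟫ = 0 := hne 0 2 (by decide)
  have e03 : ⟪b 0, b 3⟫ = 0 := hne 0 3 (by decide)
  have e10 : ⟪b 1, b 0⟫ = 0 := hne 1 0 (by decide)
  have e12 : ⟪b 1, b 2⟫ = 0 := hne 1 2 (by decide)
  have e13 : ⟪b 1, b 3⟫ = 0 := hne 1 3 (by decide)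
  have e20 : ⟪b 2, b 0⟫ = 0 := hne 2 0 (by decide)
  have e21 : ⟪b 2, b 1⟫ = 0 := hne 2 1 (by decide)
  have e23 : ⟪b 2, b 3⟫ = 0 := hne 2 3 (by decide)
  have e30 : ⟪b 3, b 0⟫ = 0 := hne 3 0 (by decide)
  have e31 : ⟪b 3, b 1⟫ = 0 := hne 3 1 (by decide)
  have e32 : ⟪b 3, b 2⟫ = 0 := hne 3 2 (by decide)
  have hsk : ∀ x y : V, ⟪Jm x, y⟫ = -⟪x, Jm y⟫ := by
    intro x y
    have h := hJmg x (Jm y)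
    rw [hJm2, inner_neg_right] at h
    linarith
  obtain ⟨m, hmdef⟩ : ∃ m : Fin 4 → Fin 4 → ℝ, m = fun i j => ⟪Jm (b j), b i⟫ :=
    ⟨_, rfl⟩
  have mval : ∀ i j, m i j = ⟪Jm (b j), b i⟫ := fun i j => by rw [hmdef]
  have hskew : ∀ i j, m i j = -m j i := by
    intro i j
    rw [mval i j, mval j i, hsk, real_inner_comm]
  have h00 : m 0 0 = 0 := by have := hskew 0 0; linarith
  have h11 : m 1 1 = 0 := by have := hskew 1 1; linarith
  have h22 : m 2 2 = 0 := by have := hskew 2 2; linarith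
  have h33 : m 3 3 = 0 := by have := hskew 3 3; linarith
  have hrepr : ∀ j, Jm (b j) = ∑ i, m i j • b i := by
    intro j
    simp only [mval]
    exact (b.sum_repr (Jm (b j))).symm.trans (Finset.sum_congr rfl fun i _ => by
      rw [b.repr_apply_apply, real_inner_comm])
  have hBsq : ∀ i j : Fin 4, (∑ k, m k j * m i k) = if j = i then -1 else 0 := by
    intro i j
    have h1 : ⟪Jm (Jm (b j)), b i⟫ = ∑ k, m k j * m i k := by
      conv_lhs => rw [hrepr j, map_sum]
      rw [sum_inner]
      refine Finset.sum_congr rfl fun k _ => ?_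
      rw [map_smul, real_inner_smul_left, ← mval i k]
    rw [hJm2, inner_neg_left, horth] at h1
    rcases eq_or_ne j i with h|h <;> simp [h] at h1 ⊢ <;> linarith
  -- diagonal equations
  have q0 : m 0 1 * m 0 1 + m 0 2 * m 0 2 + m 0 3 * m 0 3 = 1 := by
    have h := hBsq 0 0
    rw [Fin.sum_univ_four, hskew 1 0, hskew 2 0, hskew 3 0, h00] at h
    norm_num at h
    linear_combination -h
  have q1 : m 0 1 * m 0 1 + m 1 2 * m 1 2 + m 1 3 * m 1 3 = 1 := by
    have h := hBsq 1 1
    rw [Fin.sum_univ_four, hskew 1 0, hskew 2 1, hskew 3 1, h11] at h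
    norm_num at h
    linear_combination -h
  have q3 : m 0 3 * m 0 3 + m 1 3 * m 1 3 + m 2 3 * m 2 3 = 1 := by
    have h := hBsq 3 3
    rw [Fin.sum_univ_four, hskew 3 0, hskew 3 1, hskew 3 2, h33] at h
    norm_num at h
    linear_combination -h
  -- trace formula
  have htr : LinearMap.trace ℝ V (Jp ∘ₗ Jm) = ∑ i, ⟪b i, Jp (Jm (b i))⟫ := by
    rw [LinearMap.trace_eq_matrix_trace ℝ b.toBasis, Matrix.trace]
    refine Finset.sum_congr rfl fun i _ => ?_
    rw [Matrix.diag_apply, LinearMap.toMatrix_apply, OrthonormalBasis.coe_toBasis,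
      OrthonormalBasis.coe_toBasis_repr_apply, b.repr_apply_apply]
    rfl
  have hterm : ∀ i, ⟪b i, Jp (Jm (b i))⟫ = ∑ k, m k i * ⟪b i, Jp (b k)⟫ := by
    intro i
    conv_lhs => rw [hrepr i, map_sum, inner_sum]
    refine Finset.sum_congr rfl fun k _ => ?_
    rw [map_smul, real_inner_smul_right]
  have hptr : p = -(m 0 1 + m 2 3) / 2 := by
    rw [hp, htr, Fin.sum_univ_four, hterm 0, hterm 1, hterm 2, hterm 3]
    simp only [Fin.sum_univ_four, hb0, hb1, hb2, hb3, inner_neg_right,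
      e00, e01, e02, e03, e10, e11, e12, e13, e20, e21, e22, e23, e30, e31, e32, e33]
    rw [hskew 1 0, hskew 3 2]
    ring
  have aux12 := aux_le q0
  have aux34 := aux_le (x := m 2 3) (y := m 0 3) (z := m 1 3) (by linarith [q3])
  obtain ⟨aux2, aux1⟩ := aux12
  obtain ⟨aux4, aux3⟩ := aux34
  refine ⟨?_, ?_, ?_⟩
  · rw [hptr, abs_le]
    constructor <;> linarith
  · constructor
    · intro hp1
      rw [hptr] at hp1
      obtain ⟨ha, hf, hb', hc', hd', he'⟩ := aux_vals q0 q1 q3 (by linarith)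
      have m10 : m 1 0 = 1 := by rw [hskew 1 0, ha]; norm_num
      have m20 : m 2 0 = 0 := by rw [hskew 2 0, hb']; norm_num
      have m30 : m 3 0 = 0 := by rw [hskew 3 0, hc']; norm_num
      have m21 : m 2 1 = 0 := by rw [hskew 2 1, hd']; norm_num
      have m31 : m 3 1 = 0 := by rw [hskew 3 1, he']; norm_num
      have m32 : m 3 2 = 1 := by rw [hskew 3 2, hf]; norm_num
      have k0 : Jm (b 0) = Jp (b 0) := by
        rw [hrepr 0, Fin.sum_univ_four, h00, m10, m20, m30, hb0]; simp
      have k1 : Jm (b 1) = Jp (b 1) := by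
        rw [hrepr 1, Fin.sum_univ_four, ha, h11, m21, m31, hb1]; simp
      have k2 : Jm (b 2) = Jp (b 2) := by
        rw [hrepr 2, Fin.sum_univ_four, hb', hd', h22, m32, hb2]; simp
      have k3 : Jm (b 3) = Jp (b 3) := by
        rw [hrepr 3, Fin.sum_univ_four, hc', he', hf, h33, hb3]; simp
      refine b.toBasis.ext fun i => ?_
      simp only [OrthonormalBasis.coe_toBasis]
      fin_cases i
      · exact k0.symm
      · exact k1.symm
      · exact k2.symm
      · exact k3.symm
    · intro h
      rw [hp, ← h, hJpsq, map_neg, LinearMap.trace_id, hdim]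
      norm_num
  · constructor
    · intro hp1
      rw [hptr] at hp1
      obtain ⟨ha', hf', hb', hc', hd', he'⟩ :=
        aux_vals (a := -(m 0 1)) (f := -(m 2 3)) (b := m 0 2) (c := m 0 3)
          (d := m 1 2) (e := m 1 3)
          (by linear_combination q0) (by linear_combination q1)
          (by linear_combination q3) (by linarith)
      have ha : m 0 1 = 1 := by linarith
      have hf : m 2 3 = 1 := by linarith
      have m10 : m 1 0 = -1 := by rw [hskew 1 0, ha]
      have m20 : m 2 0 = 0 := by rw [hskew 2 0, hb']; norm_num
      have m30 : m 3 0 = 0 := by rw [hskew 3 0, hc']; norm_num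
      have m21 : m 2 1 = 0 := by rw [hskew 2 1, hd']; norm_num
      have m31 : m 3 1 = 0 := by rw [hskew 3 1, he']; norm_num
      have m32 : m 3 2 = -1 := by rw [hskew 3 2, hf]
      have k0 : Jm (b 0) = -Jp (b 0) := by
        rw [hrepr 0, Fin.sum_univ_four, h00, m10, m20, m30, hb0]; simp
      have k1 : Jm (b 1) = -Jp (b 1) := by
        rw [hrepr 1, Fin.sum_univ_four, ha, h11, m21, m31, hb1]; simp
      have k2 : Jm (b 2) = -Jp (b 2) := by
        rw [hrepr 2, Fin.sum_univ_four, hb', hd', h22, m32, hb2]; simp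
      have k3 : Jm (b 3) = -Jp (b 3) := by
        rw [hrepr 3, Fin.sum_univ_four, hc', he', hf, h33, hb3]; simp
      have g0 : Jp (b 0) = -Jm (b 0) := by rw [k0, neg_neg]
      have g1 : Jp (b 1) = -Jm (b 1) := by rw [k1, neg_neg]
      have g2 : Jp (b 2) = -Jm (b 2) := by rw [k2, neg_neg]
      have g3 : Jp (b 3) = -Jm (b 3) := by rw [k3, neg_neg]
      refine b.toBasis.ext fun i => ?_
      simp only [OrthonormalBasis.coe_toBasis, LinearMap.neg_apply]
      fin_cases i
      · exact g0
      · exact g1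
      · exact g2
      · exact g3
    · intro h
      rw [hp, h, LinearMap.neg_comp, hJmsq, neg_neg, LinearMap.trace_id, hdim]
      norm_num
end

section
/- With J₊, J₋ g-orthogonal complex structures on an oriented 4-dimensional inner product space inducing the given orientation, angle function p = -(1/4)trace(J₊J₋), fundamental forms F±(·,·) = g(J±·,·), Φ(·,·) = (1/2)g([J₊,J₋]·,·), and Ψ±(·,·) = -Φ(J±·,·), one has F₊ = p·F₋ + Ψ₋ and F₋ = p·F₊ - Ψ₊. -/
open scoped RealInnerProductSpace

section AuxStmt3
variable {V : Type*} [NormedAddCommGroup V] [InnerProductSpace ℝ V]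

lemma aux_sq {J : V →ₗ[ℝ] V} (hsq : J ∘ₗ J = -LinearMap.id) : ∀ v : V, J (J v) = -v := by
  intro v
  have := LinearMap.ext_iff.mp hsq v
  simpa using this

lemma aux_skew {J : V →ₗ[ℝ] V} (hsq : J ∘ₗ J = -LinearMap.id)
    (hg : ∀ x y : V, ⟪J x, J y⟫ = ⟪x, y⟫) : ∀ x y : V, ⟪x, J y⟫ = -⟪y, J x⟫ := by
  intro x y
  have h3 := hg x (J y)
  rw [aux_sq hsq, inner_neg_right] at h3
  rw [← h3, real_inner_comm]

end AuxStmt3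

lemma key_scalar (a b c d e f : ℝ)
    (E1 : a^2+b^2+c^2 = 1) (E2 : a^2+d^2+e^2 = 1) (E3 : b^2+d^2+f^2 = 1) (E4 : c^2+e^2+f^2 = 1)
    (E5 : b*d + c*e = 0) (E6 : -(a*d) + c*f = 0) (E7 : a*e + b*f = 0)
    (E8 : a*b + e*f = 0) (E9 : a*c - d*f = 0) (E10 : b*c + d*e = 0)
    (Epf : 0 < a*f - b*e + c*d) : f = a ∧ e = -b ∧ d = c := by
  set Q := (a-f)^2 + (b+e)^2 + (c-d)^2 with hQ
  set P := (a+f)^2 + (b-e)^2 + (c+d)^2 with hP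
  have hsum : P + Q = 4 := by rw [hP, hQ]; linear_combination E1 + E2 + E3 + E4
  have hdiff : P - Q = 4*(a*f - b*e + c*d) := by rw [hP, hQ]; ring
  have z11 : a^2 - f^2 = 0 := by linear_combination (E1 + E2 - E3 - E4)/2
  have z22 : b^2 - e^2 = 0 := by linear_combination (E1 + E3 - E2 - E4)/2
  have z33 : c^2 - d^2 = 0 := by linear_combination (E1 + E4 - E2 - E3)/2
  have z12 : (a+f)*(b+e) = 0 := by linear_combination E8 + E7
  have z13 : (a+f)*(c-d) = 0 := by linear_combination E9 + E6
  have z21 : (b-e)*(a-f) = 0 := by linear_combination E8 - E7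
  have z23 : (b-e)*(c-d) = 0 := by linear_combination E10 - E5
  have z31 : (c+d)*(a-f) = 0 := by linear_combination E9 - E6
  have z32 : (c+d)*(b+e) = 0 := by linear_combination E10 + E5
  have hPQ : P * Q = 0 := by
    rw [hP, hQ]
    linear_combination (a^2 - f^2) * z11 + ((a+f)*(b+e)) * z12 + ((a+f)*(c-d)) * z13
      + ((b-e)*(a-f)) * z21 + (b^2-e^2) * z22 + ((b-e)*(c-d)) * z23
      + ((c+d)*(a-f)) * z31 + ((c+d)*(b+e)) * z32 + (c^2-d^2) * z33
  have hQnn : 0 ≤ Q := by rw [hQ]; positivity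
  have hQlt : Q < 2 := by linarith
  have hprod : Q * (4 - Q) = 0 := by linear_combination hPQ - Q * hsum
  have hQ0 : Q = 0 := by
    rcases mul_eq_zero.mp hprod with h | h
    · exact h
    · linarith
  have hQ0' : (a-f)^2 + (b+e)^2 + (c-d)^2 = 0 := hQ.symm.trans hQ0
  have h1 : (a-f)^2 = 0 := by linarith [sq_nonneg (a-f), sq_nonneg (b+e), sq_nonneg (c-d)]
  have h2 : (b+e)^2 = 0 := by linarith [sq_nonneg (a-f), sq_nonneg (b+e), sq_nonneg (c-d)]
  have h3 : (c-d)^2 = 0 := by linarith [sq_nonneg (a-f), sq_nonneg (b+e), sq_nonneg (c-d)]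
  have h1' := pow_eq_zero_iff (n := 2) (by norm_num) |>.mp h1
  have h2' := pow_eq_zero_iff (n := 2) (by norm_num) |>.mp h2
  have h3' := pow_eq_zero_iff (n := 2) (by norm_num) |>.mp h3
  refine ⟨by linarith, by linarith, by linarith⟩

lemma my_det_fin_four (M : Matrix (Fin 4) (Fin 4) ℝ) : M.det =
    M 0 0 * (M 1 1 * (M 2 2 * M 3 3 - M 2 3 * M 3 2) - M 1 2 * (M 2 1 * M 3 3 - M 2 3 * M 3 1)
      + M 1 3 * (M 2 1 * M 3 2 - M 2 2 * M 3 1))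
    - M 0 1 * (M 1 0 * (M 2 2 * M 3 3 - M 2 3 * M 3 2) - M 1 2 * (M 2 0 * M 3 3 - M 2 3 * M 3 0)
      + M 1 3 * (M 2 0 * M 3 2 - M 2 2 * M 3 0))
    + M 0 2 * (M 1 0 * (M 2 1 * M 3 3 - M 2 3 * M 3 1) - M 1 1 * (M 2 0 * M 3 3 - M 2 3 * M 3 0)
      + M 1 3 * (M 2 0 * M 3 1 - M 2 1 * M 3 0))
    - M 0 3 * (M 1 0 * (M 2 1 * M 3 2 - M 2 2 * M 3 1) - M 1 1 * (M 2 0 * M 3 2 - M 2 2 * M 3 0)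
      + M 1 2 * (M 2 0 * M 3 1 - M 2 1 * M 3 0)) := by
  simp only [Matrix.det_succ_row_zero, ← Nat.not_even_iff_odd, Matrix.submatrix_apply,
    Fin.succ_zero_eq_one, Matrix.submatrix_submatrix, Matrix.det_unique, Fin.default_eq_zero,
    Function.comp_apply, Fin.succ_one_eq_two, Fin.sum_univ_succ, Fin.val_zero, Fin.zero_succAbove,
    Finset.univ_unique, Fin.val_succ, Fin.val_eq_zero, Fin.succ_succAbove_zero,
    Finset.sum_singleton, Fin.succ_succAbove_one, Even.add_self]
  simp only [show Fin.succ (2:Fin 3) = (3:Fin 4) from rfl,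
    show Fin.succAbove (2:Fin 4) (2:Fin 3) = (3:Fin 4) from by decide,
    show Fin.succAbove (3:Fin 4) (2:Fin 3) = (2:Fin 4) from by decide,
    show Fin.succAbove (1:Fin 4) (2:Fin 3) = (3:Fin 4) from by decide]
  ring


/-- With fundamental forms `F±(·,·) = g(J±·,·)`, `Φ(·,·) = (1/2)g([J₊,J₋]·,·)` and
`Ψ±(·,·) = -Φ(J±·,·)`, and the angle function `p = -(1/4)trace(J₊J₋)`, one has
`F₊ = p·F₋ + Ψ₋` and `F₋ = p·F₊ - Ψ₊`. -/
theorem stmt3 {V : Type*} [NormedAddCommGroup V] [InnerProductSpace ℝ V]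
    (hdim : Module.finrank ℝ V = 4) (o : Orientation ℝ V (Fin 4))
    (Jp Jm : V →ₗ[ℝ] V)
    (hJpsq : Jp ∘ₗ Jp = -LinearMap.id) (hJmsq : Jm ∘ₗ Jm = -LinearMap.id)
    (hJpg : ∀ x y : V, ⟪Jp x, Jp y⟫ = ⟪x, y⟫)
    (hJmg : ∀ x y : V, ⟪Jm x, Jm y⟫ = ⟪x, y⟫)
    (hJpo : InducesOrientation o Jp) (hJmo : InducesOrientation o Jm)
    (p : ℝ) (hp : p = -(1/4) * LinearMap.trace ℝ V (Jp ∘ₗ Jm))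
    (Fp Fm Φ Ψp Ψm : V → V → ℝ)
    (hFp : ∀ x y, Fp x y = ⟪Jp x, y⟫) (hFm : ∀ x y, Fm x y = ⟪Jm x, y⟫)
    (hΦ : ∀ x y, Φ x y = (1/2) * ⟪(Jp ∘ₗ Jm - Jm ∘ₗ Jp) x, y⟫)
    (hΨp : ∀ x y, Ψp x y = -Φ (Jp x) y) (hΨm : ∀ x y, Ψm x y = -Φ (Jm x) y) :
    ∀ x y : V, Fp x y = p * Fm x y + Ψm x y ∧ Fm x y = p * Fp x y - Ψp x y := by
  obtain ⟨b, hbo, hJb0, hJb2⟩ := hJpo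
  obtain ⟨c, hco, hJc0, hJc2⟩ := hJmo
  have hJp2 := aux_sq hJpsq
  have hJm2 := aux_sq hJmsq
  have skp := aux_skew hJpsq hJpg
  have skm := aux_skew hJmsq hJmg
  have hJb1 : Jp (b 1) = -b 0 := by rw [← hJb0, hJp2]
  have hJb3 : Jp (b 3) = -b 2 := by rw [← hJb2, hJp2]
  have hJc1 : Jm (c 1) = -c 0 := by rw [← hJc0, hJm2]
  have hJc3 : Jm (c 3) = -c 2 := by rw [← hJc2, hJm2]
  have hob := orthonormal_iff_ite.mp b.orthonormal
  have mdi : ∀ i : Fin 4, ⟪b i, Jm (b i)⟫ = 0 := fun i => by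
    have := skm (b i) (b i); linarith
  have msw : ∀ i j : Fin 4, ⟪b j, Jm (b i)⟫ = -⟪b i, Jm (b j)⟫ := fun i j => skm (b j) (b i)
  have horth : ∀ i j : Fin 4,
      ⟪b 0, Jm (b i)⟫ * ⟪b 0, Jm (b j)⟫ + ⟪b 1, Jm (b i)⟫ * ⟪b 1, Jm (b j)⟫ +
        ⟪b 2, Jm (b i)⟫ * ⟪b 2, Jm (b j)⟫ + ⟪b 3, Jm (b i)⟫ * ⟪b 3, Jm (b j)⟫ =
        if i = j then 1 else 0 := by
    intro i j
    have h := b.sum_inner_mul_inner (Jm (b i)) (Jm (b j))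
    rw [hJmg, Fin.sum_univ_four] at h
    rw [real_inner_comm (b 0) (Jm (b i)), real_inner_comm (b 1) (Jm (b i)),
      real_inner_comm (b 2) (Jm (b i)), real_inner_comm (b 3) (Jm (b i)), hob i j] at h
    exact h
  -- specific skew instances
  have m10 := msw 0 1
  have m20 := msw 0 2
  have m30 := msw 0 3
  have m21 := msw 1 2
  have m31 := msw 1 3
  have m32 := msw 2 3
  have d0 := mdi 0
  have d1 := mdi 1
  have d2 := mdi 2
  have d3 := mdi 3
  have E1 : ⟪b 0, Jm (b 1)⟫^2 + ⟪b 0, Jm (b 2)⟫^2 + ⟪b 0, Jm (b 3)⟫^2 = 1 := by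
    have h := horth 0 0
    simp only [d0, d1, d2, d3, m10, m20, m30, m21, m31, m32] at h
    norm_num at h; linear_combination h
  have E2 : ⟪b 0, Jm (b 1)⟫^2 + ⟪b 1, Jm (b 2)⟫^2 + ⟪b 1, Jm (b 3)⟫^2 = 1 := by
    have h := horth 1 1
    simp only [d0, d1, d2, d3, m10, m20, m30, m21, m31, m32] at h
    norm_num at h; linear_combination h
  have E3 : ⟪b 0, Jm (b 2)⟫^2 + ⟪b 1, Jm (b 2)⟫^2 + ⟪b 2, Jm (b 3)⟫^2 = 1 := by
    have h := horth 2 2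
    simp only [d0, d1, d2, d3, m10, m20, m30, m21, m31, m32] at h
    norm_num at h; linear_combination h
  have E4 : ⟪b 0, Jm (b 3)⟫^2 + ⟪b 1, Jm (b 3)⟫^2 + ⟪b 2, Jm (b 3)⟫^2 = 1 := by
    have h := horth 3 3
    simp only [d0, d1, d2, d3, m10, m20, m30, m21, m31, m32] at h
    norm_num at h; linear_combination h
  have E5 : ⟪b 0, Jm (b 2)⟫ * ⟪b 1, Jm (b 2)⟫ + ⟪b 0, Jm (b 3)⟫ * ⟪b 1, Jm (b 3)⟫ = 0 := by
    have h := horth 0 1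
    simp only [d0, d1, d2, d3, m10, m20, m30, m21, m31, m32] at h
    rw [if_neg (by decide)] at h; linear_combination h
  have E6 : -(⟪b 0, Jm (b 1)⟫ * ⟪b 1, Jm (b 2)⟫) + ⟪b 0, Jm (b 3)⟫ * ⟪b 2, Jm (b 3)⟫ = 0 := by
    have h := horth 0 2
    simp only [d0, d1, d2, d3, m10, m20, m30, m21, m31, m32] at h
    rw [if_neg (by decide)] at h; linear_combination h
  have E7 : ⟪b 0, Jm (b 1)⟫ * ⟪b 1, Jm (b 3)⟫ + ⟪b 0, Jm (b 2)⟫ * ⟪b 2, Jm (b 3)⟫ = 0 := by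
    have h := horth 0 3
    simp only [d0, d1, d2, d3, m10, m20, m30, m21, m31, m32] at h
    rw [if_neg (by decide)] at h; linear_combination -h
  have E8 : ⟪b 0, Jm (b 1)⟫ * ⟪b 0, Jm (b 2)⟫ + ⟪b 1, Jm (b 3)⟫ * ⟪b 2, Jm (b 3)⟫ = 0 := by
    have h := horth 1 2
    simp only [d0, d1, d2, d3, m10, m20, m30, m21, m31, m32] at h
    rw [if_neg (by decide)] at h; linear_combination h
  have E9 : ⟪b 0, Jm (b 1)⟫ * ⟪b 0, Jm (b 3)⟫ - ⟪b 1, Jm (b 2)⟫ * ⟪b 2, Jm (b 3)⟫ = 0 := by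
    have h := horth 1 3
    simp only [d0, d1, d2, d3, m10, m20, m30, m21, m31, m32] at h
    rw [if_neg (by decide)] at h; linear_combination h
  have E10 : ⟪b 0, Jm (b 2)⟫ * ⟪b 0, Jm (b 3)⟫ + ⟪b 1, Jm (b 2)⟫ * ⟪b 1, Jm (b 3)⟫ = 0 := by
    have h := horth 2 3
    simp only [d0, d1, d2, d3, m10, m20, m30, m21, m31, m32] at h
    rw [if_neg (by decide)] at h; linear_combination h
  have hCn : ∀ i j : Fin 4, ⟪b i, Jm (b j)⟫ =
      ⟪b i, c 0⟫ * -⟪b j, c 1⟫ + ⟪b i, c 1⟫ * ⟪b j, c 0⟫ +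
        ⟪b i, c 2⟫ * -⟪b j, c 3⟫ + ⟪b i, c 3⟫ * ⟪b j, c 2⟫ := by
    intro i j
    have h := c.sum_inner_mul_inner (b i) (Jm (b j))
    rw [Fin.sum_univ_four] at h
    rw [skm (c 0) (b j), skm (c 1) (b j), skm (c 2) (b j), skm (c 3) (b j)] at h
    rw [hJc0, hJc1, hJc2, hJc3] at h
    simp only [inner_neg_right] at h
    linear_combination -h
  have hdet : (0:ℝ) < b.toBasis.det ⇑c.toBasis :=
    (Module.Basis.orientation_eq_iff_det_pos _ _).mp (hbo.trans hco.symm)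
  have hdet' : b.toBasis.det ⇑c.toBasis =
      ⟪b 0, c 0⟫ * (⟪b 1, c 1⟫ * (⟪b 2, c 2⟫ * ⟪b 3, c 3⟫ - ⟪b 2, c 3⟫ * ⟪b 3, c 2⟫)
          - ⟪b 1, c 2⟫ * (⟪b 2, c 1⟫ * ⟪b 3, c 3⟫ - ⟪b 2, c 3⟫ * ⟪b 3, c 1⟫)
          + ⟪b 1, c 3⟫ * (⟪b 2, c 1⟫ * ⟪b 3, c 2⟫ - ⟪b 2, c 2⟫ * ⟪b 3, c 1⟫))
      - ⟪b 0, c 1⟫ * (⟪b 1, c 0⟫ * (⟪b 2, c 2⟫ * ⟪b 3, c 3⟫ - ⟪b 2, c 3⟫ * ⟪b 3, c 2⟫)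
          - ⟪b 1, c 2⟫ * (⟪b 2, c 0⟫ * ⟪b 3, c 3⟫ - ⟪b 2, c 3⟫ * ⟪b 3, c 0⟫)
          + ⟪b 1, c 3⟫ * (⟪b 2, c 0⟫ * ⟪b 3, c 2⟫ - ⟪b 2, c 2⟫ * ⟪b 3, c 0⟫))
      + ⟪b 0, c 2⟫ * (⟪b 1, c 0⟫ * (⟪b 2, c 1⟫ * ⟪b 3, c 3⟫ - ⟪b 2, c 3⟫ * ⟪b 3, c 1⟫)
          - ⟪b 1, c 1⟫ * (⟪b 2, c 0⟫ * ⟪b 3, c 3⟫ - ⟪b 2, c 3⟫ * ⟪b 3, c 0⟫)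
          + ⟪b 1, c 3⟫ * (⟪b 2, c 0⟫ * ⟪b 3, c 1⟫ - ⟪b 2, c 1⟫ * ⟪b 3, c 0⟫))
      - ⟪b 0, c 3⟫ * (⟪b 1, c 0⟫ * (⟪b 2, c 1⟫ * ⟪b 3, c 2⟫ - ⟪b 2, c 2⟫ * ⟪b 3, c 1⟫)
          - ⟪b 1, c 1⟫ * (⟪b 2, c 0⟫ * ⟪b 3, c 2⟫ - ⟪b 2, c 2⟫ * ⟪b 3, c 0⟫)
          + ⟪b 1, c 2⟫ * (⟪b 2, c 0⟫ * ⟪b 3, c 1⟫ - ⟪b 2, c 1⟫ * ⟪b 3, c 0⟫)) := by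
    rw [Module.Basis.det_apply, my_det_fin_four]
    simp only [Module.Basis.toMatrix_apply, OrthonormalBasis.coe_toBasis_repr_apply,
      OrthonormalBasis.repr_apply_apply, OrthonormalBasis.coe_toBasis]
  have Epf : 0 < ⟪b 0, Jm (b 1)⟫ * ⟪b 2, Jm (b 3)⟫ - ⟪b 0, Jm (b 2)⟫ * ⟪b 1, Jm (b 3)⟫ +
      ⟪b 0, Jm (b 3)⟫ * ⟪b 1, Jm (b 2)⟫ := by
    have heq : ⟪b 0, Jm (b 1)⟫ * ⟪b 2, Jm (b 3)⟫ - ⟪b 0, Jm (b 2)⟫ * ⟪b 1, Jm (b 3)⟫ +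
        ⟪b 0, Jm (b 3)⟫ * ⟪b 1, Jm (b 2)⟫ = b.toBasis.det ⇑c.toBasis := by
      rw [hdet', hCn 0 1, hCn 2 3, hCn 0 2, hCn 1 3, hCn 0 3, hCn 1 2]
      ring
    rw [heq]; exact hdet
  obtain ⟨hfa, hea, hda⟩ := key_scalar _ _ _ _ _ _ E1 E2 E3 E4 E5 E6 E7 E8 E9 E10 Epf
  set na := ⟪b 0, Jm (b 1)⟫ with hna
  set nb := ⟪b 0, Jm (b 2)⟫ with hnb
  set nc := ⟪b 0, Jm (b 3)⟫ with hnc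
  have X0 : Jm (b 0) = (-na) • b 1 + (-nb) • b 2 + (-nc) • b 3 := by
    have h := (b.sum_repr' (Jm (b 0))).symm
    rw [Fin.sum_univ_four, d0, m10, m20, m30] at h
    rw [h]; module
  have X1 : Jm (b 1) = na • b 0 + (-nc) • b 2 + nb • b 3 := by
    have h := (b.sum_repr' (Jm (b 1))).symm
    rw [Fin.sum_univ_four, d1, m21, m31, hda, hea] at h
    rw [h]; module
  have X2 : Jm (b 2) = nb • b 0 + nc • b 1 + (-na) • b 3 := by
    have h := (b.sum_repr' (Jm (b 2))).symm
    rw [Fin.sum_univ_four, d2, m32, hda, hfa] at h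
    rw [h]; module
  have X3 : Jm (b 3) = nc • b 0 + (-nb) • b 1 + na • b 2 := by
    have h := (b.sum_repr' (Jm (b 3))).symm
    rw [Fin.sum_univ_four, d3, hea, hfa] at h
    rw [h]; module
  have hK : Jp ∘ₗ Jm + Jm ∘ₗ Jp = (2 * na) • LinearMap.id := by
    apply b.toBasis.ext
    intro i
    fin_cases i
    · show (Jp ∘ₗ Jm + Jm ∘ₗ Jp) (b 0) = ((2 * na) • LinearMap.id) (b 0)
      simp only [LinearMap.add_apply, LinearMap.comp_apply, LinearMap.smul_apply,
        LinearMap.id_apply]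
      rw [X0, hJb0, X1]
      simp only [map_add, map_smul, map_neg, hJb1, hJb2, hJb3]
      module
    · show (Jp ∘ₗ Jm + Jm ∘ₗ Jp) (b 1) = ((2 * na) • LinearMap.id) (b 1)
      simp only [LinearMap.add_apply, LinearMap.comp_apply, LinearMap.smul_apply,
        LinearMap.id_apply]
      rw [X1, hJb1, map_neg, X0]
      simp only [map_add, map_smul, map_neg, hJb0, hJb2, hJb3]
      module
    · show (Jp ∘ₗ Jm + Jm ∘ₗ Jp) (b 2) = ((2 * na) • LinearMap.id) (b 2)
      simp only [LinearMap.add_apply, LinearMap.comp_apply, LinearMap.smul_apply,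
        LinearMap.id_apply]
      rw [X2, hJb2, X3]
      simp only [map_add, map_smul, map_neg, hJb0, hJb1, hJb3]
      module
    · show (Jp ∘ₗ Jm + Jm ∘ₗ Jp) (b 3) = ((2 * na) • LinearMap.id) (b 3)
      simp only [LinearMap.add_apply, LinearMap.comp_apply, LinearMap.smul_apply,
        LinearMap.id_apply]
      rw [X3, hJb3, map_neg, X2]
      simp only [map_add, map_smul, map_neg, hJb0, hJb1, hJb2]
      module
  have hKv : ∀ v : V, Jp (Jm v) + Jm (Jp v) = (2 * na) • v := by
    intro v
    have h := LinearMap.ext_iff.mp hK v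
    simpa using h
  have o00 : ⟪b 0, b 0⟫ = (1:ℝ) := by rw [hob 0 0, if_pos rfl]
  have o11 : ⟪b 1, b 1⟫ = (1:ℝ) := by rw [hob 1 1, if_pos rfl]
  have o22 : ⟪b 2, b 2⟫ = (1:ℝ) := by rw [hob 2 2, if_pos rfl]
  have o33 : ⟪b 3, b 3⟫ = (1:ℝ) := by rw [hob 3 3, if_pos rfl]
  have hpA : (-(1/4) * LinearMap.trace ℝ V (Jp ∘ₗ Jm) : ℝ) = -na := by
    rw [LinearMap.trace_eq_matrix_trace ℝ b.toBasis, Matrix.trace, Fin.sum_univ_four]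
    simp only [Matrix.diag_apply, LinearMap.toMatrix_apply, OrthonormalBasis.coe_toBasis,
      OrthonormalBasis.coe_toBasis_repr_apply, OrthonormalBasis.repr_apply_apply,
      LinearMap.comp_apply]
    rw [X0, X1, X2, X3]
    simp only [map_add, map_smul, map_neg, hJb0, hJb1, hJb2, hJb3, inner_add_right,
      inner_smul_right, inner_neg_right]
    simp only [hob, show ((1:Fin 4) = 0) = False from by simp, show ((2:Fin 4) = 0) = False from by simp,
      show ((3:Fin 4) = 0) = False from by simp, show ((0:Fin 4) = 1) = False from by simp,
      show ((2:Fin 4) = 1) = False from by simp, show ((3:Fin 4) = 1) = False from by simp,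
      show ((0:Fin 4) = 2) = False from by simp, show ((1:Fin 4) = 2) = False from by simp,
      show ((3:Fin 4) = 2) = False from by simp, show ((0:Fin 4) = 3) = False from by simp,
      show ((1:Fin 4) = 3) = False from by simp, show ((2:Fin 4) = 3) = False from by simp,
      if_true, if_false, reduceIte]
    norm_num
    ring
  intro x y
  have hpA' : p = -na := hp.trans hpA
  have e1 : Jm (Jp (Jm x)) = (2 * na) • Jm x + Jp x := by
    have h := hKv (Jm x)
    rw [hJm2 x, map_neg, ← sub_eq_neg_add] at h
    exact sub_eq_iff_eq_add.mp h
  have e2 : Jp (Jm (Jp x)) = (2 * na) • Jp x + Jm x := by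
    have h := hKv (Jp x)
    rw [hJp2 x, map_neg, ← sub_eq_add_neg] at h
    exact sub_eq_iff_eq_add.mp h
  constructor
  · rw [hFp, hFm, hΨm, hΦ]
    simp only [LinearMap.sub_apply, LinearMap.comp_apply]
    rw [hJm2 x, map_neg, e1]
    simp only [inner_add_left, inner_neg_left, inner_sub_left, real_inner_smul_left]
    rw [hpA']
    ring
  · rw [hFm, hFp, hΨp, hΦ]
    simp only [LinearMap.sub_apply, LinearMap.comp_apply]
    rw [hJp2 x, map_neg, e2]
    simp only [inner_add_left, inner_neg_left, inner_sub_left, real_inner_smul_left]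
    rw [hpA']
    ring
end

section
/- Let J₊, J₋ be g-orthogonal complex structures on a 4-dimensional inner product space. The commutator [J₊,J₋] vanishes if and only if J₊ = J₋ or J₊ = -J₋. -/
open scoped RealInnerProductSpace

private lemma det4_aux (a0 a1 a2 a3 c0 c1 c2 c3 : ℝ) :
    Matrix.det !![a0, -a1, c0, -c1; a1, a0, c1, c0; a2, -a3, c2, -c3; a3, a2, c3, c2]
      = (a0*c2 - a1*c3 - a2*c0 + a3*c1)^2 + (a0*c3 + a1*c2 - a2*c1 - a3*c0)^2 := by
  simp [Matrix.det_succ_row_zero, Fin.sum_univ_succ, Matrix.det_fin_three, Fin.succAbove]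
  ring

/-- Two bases adapted to the same complex structure give the same orientation. -/
private lemma adapted_bases_orientation_eq {V : Type*} [NormedAddCommGroup V]
    [InnerProductSpace ℝ V] (J : V →ₗ[ℝ] V) (hJsq : J ∘ₗ J = -LinearMap.id)
    (b c : Module.Basis (Fin 4) ℝ V)
    (hb0 : J (b 0) = b 1) (hb2 : J (b 2) = b 3)
    (hc0 : J (c 0) = c 1) (hc2 : J (c 2) = c 3) :
    b.orientation = c.orientation := by
  have hJ : ∀ x : V, J (J x) = -x := by
    intro x
    have := LinearMap.congr_fun hJsq x
    simpa using this
  have hb1 : J (b 1) = -(b 0) := by rw [← hb0, hJ]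
  have hb3 : J (b 3) = -(b 2) := by rw [← hb2, hJ]
  have k0 : (b.coord 0).comp J = -(b.coord 1) := by
    apply b.ext; intro i; fin_cases i <;>
      simp [hb0, hb1, hb2, hb3, Module.Basis.coord_apply]
  have k1 : (b.coord 1).comp J = b.coord 0 := by
    apply b.ext; intro i; fin_cases i <;>
      simp [hb0, hb1, hb2, hb3, Module.Basis.coord_apply]
  have k2 : (b.coord 2).comp J = -(b.coord 3) := by
    apply b.ext; intro i; fin_cases i <;>
      simp [hb0, hb1, hb2, hb3, Module.Basis.coord_apply]
  have k3 : (b.coord 3).comp J = b.coord 2 := by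
    apply b.ext; intro i; fin_cases i <;>
      simp [hb0, hb1, hb2, hb3, Module.Basis.coord_apply]
  have key0 : ∀ x : V, b.repr (J x) 0 = -(b.repr x 1) := fun x => by
    simpa [Module.Basis.coord_apply] using LinearMap.congr_fun k0 x
  have key1 : ∀ x : V, b.repr (J x) 1 = b.repr x 0 := fun x => by
    simpa [Module.Basis.coord_apply] using LinearMap.congr_fun k1 x
  have key2 : ∀ x : V, b.repr (J x) 2 = -(b.repr x 3) := fun x => by
    simpa [Module.Basis.coord_apply] using LinearMap.congr_fun k2 x
  have key3 : ∀ x : V, b.repr (J x) 3 = b.repr x 2 := fun x => by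
    simpa [Module.Basis.coord_apply] using LinearMap.congr_fun k3 x
  set a : Fin 4 → ℝ := fun i => b.repr (c 0) i with ha
  set d : Fin 4 → ℝ := fun i => b.repr (c 2) i with hd
  have hc1 : c 1 = J (c 0) := hc0.symm
  have hc3 : c 3 = J (c 2) := hc2.symm
  have hM : b.toMatrix ⇑c =
      !![a 0, -(a 1), d 0, -(d 1); a 1, a 0, d 1, d 0;
         a 2, -(a 3), d 2, -(d 3); a 3, a 2, d 3, d 2] := by
    ext i j
    fin_cases j <;> fin_cases i <;>
      simp [Module.Basis.toMatrix_apply, ha, hd, hc1, hc3, key0, key1, key2, key3]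
  have hdet : b.det ⇑c = (a 0 * d 2 - a 1 * d 3 - a 2 * d 0 + a 3 * d 1)^2
      + (a 0 * d 3 + a 1 * d 2 - a 2 * d 1 - a 3 * d 0)^2 := by
    rw [Module.Basis.det_apply, hM, det4_aux]
  have hne : b.det ⇑c ≠ 0 := (b.isUnit_det c).ne_zero
  rw [Module.Basis.orientation_eq_iff_det_pos]
  have h0 : (0:ℝ) ≤ b.det ⇑c := by rw [hdet]; positivity
  exact lt_of_le_of_ne h0 (Ne.symm hne)

/-- Any basis adapted to `J` is positively oriented when `J` induces `o`. -/
private lemma adapted_basis_orientation {V : Type*} [NormedAddCommGroup V]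
    [InnerProductSpace ℝ V] {o : Orientation ℝ V (Fin 4)} {J : V →ₗ[ℝ] V}
    (hJsq : J ∘ₗ J = -LinearMap.id) (hJo : InducesOrientation o J)
    (c : Module.Basis (Fin 4) ℝ V) (hc0 : J (c 0) = c 1) (hc2 : J (c 2) = c 3) :
    c.orientation = o := by
  obtain ⟨b, hbo, hb0, hb2⟩ := hJo
  rw [← hbo]
  exact (adapted_bases_orientation_eq J hJsq b.toBasis c (by simpa using hb0)
    (by simpa using hb2) hc0 hc2).symm

/-- For `g`-orthogonal complex structures `J₊, J₋` on a `4`-dimensional inner product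
space inducing the same orientation, the commutator `[J₊,J₋]` vanishes if and only if
`J₊ = J₋` or `J₊ = -J₋`. -/
theorem stmt6 {V : Type*} [NormedAddCommGroup V] [InnerProductSpace ℝ V]
    (hdim : Module.finrank ℝ V = 4) (o : Orientation ℝ V (Fin 4))
    (Jp Jm : V →ₗ[ℝ] V)
    (hJpsq : Jp ∘ₗ Jp = -LinearMap.id) (hJmsq : Jm ∘ₗ Jm = -LinearMap.id)
    (hJpg : ∀ x y : V, ⟪Jp x, Jp y⟫ = ⟪x, y⟫)
    (hJmg : ∀ x y : V, ⟪Jm x, Jm y⟫ = ⟪x, y⟫)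
    (hJpo : InducesOrientation o Jp) (hJmo : InducesOrientation o Jm) :
    Jp ∘ₗ Jm - Jm ∘ₗ Jp = 0 ↔ (Jp = Jm ∨ Jp = -Jm) := by
  have hJp2 : ∀ x : V, Jp (Jp x) = -x := fun x => by
    simpa using LinearMap.congr_fun hJpsq x
  have hJm2 : ∀ x : V, Jm (Jm x) = -x := fun x => by
    simpa using LinearMap.congr_fun hJmsq x
  constructor
  · intro hc
    have hcomm : ∀ x : V, Jp (Jm x) = Jm (Jp x) := by
      intro x
      have := LinearMap.congr_fun hc x
      simpa [sub_eq_zero] using this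
    by_contra hne
    push_neg at hne
    obtain ⟨hne1, hne2⟩ := hne
    set A : V →ₗ[ℝ] V := Jp ∘ₗ Jm with hA
    have hAapp : ∀ x : V, A x = Jp (Jm x) := fun x => rfl
    have hA2 : ∀ x : V, A (A x) = x := by
      intro x
      rw [hAapp, hAapp, ← hcomm (Jm x), hJp2, hJm2, neg_neg]
    have hAg : ∀ x y : V, ⟪A x, A y⟫ = ⟪x, y⟫ := by
      intro x y; rw [hAapp, hAapp, hJpg, hJmg]
    have hplus : ∀ x : V, A x = x → Jm x = -(Jp x) := by
      intro x hx
      rw [hAapp] at hx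
      have := congrArg Jp hx
      rw [hJp2] at this
      rw [← this, neg_neg]
    have hminus : ∀ x : V, A x = -x → Jm x = Jp x := by
      intro x hx
      rw [hAapp] at hx
      have := congrArg Jp hx
      rw [hJp2, map_neg] at this
      exact neg_injective this
    -- produce a nonzero `+1`-eigenvector
    obtain ⟨x, hx⟩ : ∃ x : V, Jp x ≠ Jm x := by
      by_contra h
      push_neg at h
      exact hne1 (LinearMap.ext fun x => h x)
    have hu : A (x + A x) = x + A x := by rw [map_add, hA2, add_comm]
    have hune : x + A x ≠ 0 := by
      intro h0
      have : A x = -x := eq_neg_of_add_eq_zero_right h0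
      exact hx ((hminus x this).symm)
    obtain ⟨y, hy⟩ : ∃ y : V, Jp y ≠ -(Jm y) := by
      by_contra h
      push_neg at h
      exact hne2 (LinearMap.ext fun y => by simpa using h y)
    have hw : A (y - A y) = -(y - A y) := by rw [map_sub, hA2]; abel
    have hwne : y - A y ≠ 0 := by
      intro h0
      have : A y = y := by rw [sub_eq_zero] at h0; exact h0.symm
      have := hplus y this
      exact hy (by rw [this, neg_neg])
    -- normalize
    set e : V := ‖x + A x‖⁻¹ • (x + A x) with he
    set f : V := ‖y - A y‖⁻¹ • (y - A y) with hf
    have hAe : A e = e := by rw [he, map_smul, hu]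
    have hAf : A f = -f := by rw [hf, map_smul, hw, smul_neg]
    have hene : ‖e‖ = 1 := norm_smul_inv_norm hune
    have hfne : ‖f‖ = 1 := norm_smul_inv_norm hwne
    have hJme : Jm e = -(Jp e) := hplus e hAe
    have hJmf : Jm f = Jp f := hminus f hAf
    have hAJpe : A (Jp e) = Jp e := by
      rw [hAapp, ← hcomm, ← hAapp, hAe]
    have hAJpf : A (Jp f) = -(Jp f) := by
      rw [hAapp, ← hcomm, ← hAapp, hAf, map_neg]
    -- orthogonality facts
    have hmixed : ∀ u w : V, A u = u → A w = -w → ⟪u, w⟫ = 0 := by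
      intro u w hu' hw'
      have h1 : ⟪u, w⟫ = ⟪A u, A w⟫ := (hAg u w).symm
      rw [hu', hw', inner_neg_right] at h1
      linarith
    have hxJx : ∀ u : V, ⟪u, Jp u⟫ = 0 := by
      intro u
      have h1 := hJpg u (Jp u)
      rw [hJp2, inner_neg_right] at h1
      have h2 := real_inner_comm (Jp u) u
      linarith
    have hee : ⟪e, e⟫ = 1 := by
      rw [real_inner_self_eq_norm_mul_norm, hene]; norm_num
    have hff : ⟪f, f⟫ = 1 := by
      rw [real_inner_self_eq_norm_mul_norm, hfne]; norm_num
    have hJee : ⟪Jp e, Jp e⟫ = 1 := by rw [hJpg]; exact hee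
    have hJff : ⟪Jp f, Jp f⟫ = 1 := by rw [hJpg]; exact hff
    have hef : ⟪e, f⟫ = 0 := hmixed e f hAe hAf
    have heJf : ⟪e, Jp f⟫ = 0 := hmixed e (Jp f) hAe hAJpf
    have hJef : ⟪Jp e, f⟫ = 0 := hmixed (Jp e) f hAJpe hAf
    have hJeJf : ⟪Jp e, Jp f⟫ = 0 := by rw [hJpg]; exact hef
    have heJe : ⟪e, Jp e⟫ = 0 := hxJx e
    have hfJf : ⟪f, Jp f⟫ = 0 := hxJx f
    -- the two adapted bases
    set v : Fin 4 → V := ![e, Jp e, f, Jp f] with hv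
    set v' : Fin 4 → V := ![e, -(Jp e), f, Jp f] with hv'
    have hov : Orthonormal ℝ v := by
      rw [orthonormal_iff_ite]
      intro i j
      fin_cases i <;> fin_cases j <;>
        simp [hv, hee, hff, hJee, hJff, hef, heJf, hJef, hJeJf, heJe, hfJf,
          real_inner_comm e f, real_inner_comm e (Jp e), real_inner_comm e (Jp f),
          real_inner_comm (Jp e) f, real_inner_comm (Jp e) (Jp f), real_inner_comm f (Jp f),
          (show ‖Jp e‖ = 1 from by rw [norm_eq_sqrt_real_inner, hJee, Real.sqrt_one]),
          (show ‖Jp f‖ = 1 from by rw [norm_eq_sqrt_real_inner, hJff, Real.sqrt_one]), hene, hfne]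
    have hov' : Orthonormal ℝ v' := by
      rw [orthonormal_iff_ite]
      intro i j
      fin_cases i <;> fin_cases j <;>
        simp [hv', hee, hff, hJee, hJff, hef, heJf, hJef, hJeJf, heJe, hfJf,
          inner_neg_left, inner_neg_right,
          real_inner_comm e f, real_inner_comm e (Jp e), real_inner_comm e (Jp f),
          real_inner_comm (Jp e) f, real_inner_comm (Jp e) (Jp f), real_inner_comm f (Jp f),
          (show ‖Jp e‖ = 1 from by rw [norm_eq_sqrt_real_inner, hJee, Real.sqrt_one]),
          (show ‖Jp f‖ = 1 from by rw [norm_eq_sqrt_real_inner, hJff, Real.sqrt_one]), hene, hfne]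
    have hcard : Fintype.card (Fin 4) = Module.finrank ℝ V := by
      rw [Fintype.card_fin, hdim]
    set B : Module.Basis (Fin 4) ℝ V :=
      basisOfLinearIndependentOfCardEqFinrank hov.linearIndependent hcard with hB
    set B' : Module.Basis (Fin 4) ℝ V :=
      basisOfLinearIndependentOfCardEqFinrank hov'.linearIndependent hcard with hB'
    have hBv : ⇑B = v := coe_basisOfLinearIndependentOfCardEqFinrank _ _
    have hB'v : ⇑B' = v' := coe_basisOfLinearIndependentOfCardEqFinrank _ _
    have hBo : B.orientation = o := by
      apply adapted_basis_orientation hJpsq hJpo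
      · rw [hBv]; simp [hv]
      · rw [hBv]; simp [hv]
    have hB'o : B'.orientation = o := by
      apply adapted_basis_orientation hJmsq hJmo
      · rw [hB'v]; simp [hv', hJme]
      · rw [hB'v]; simp [hv', hJmf]
    have horient : B.orientation = B'.orientation := by rw [hBo, hB'o]
    rw [Module.Basis.orientation_eq_iff_det_pos] at horient
    have hM : B.toMatrix ⇑B' = !![1,0,0,0; 0,-1,0,0; 0,0,1,0; 0,0,0,1] := by
      have h0 : v' 0 = B 0 := by rw [hBv]; rfl
      have h1 : v' 1 = -(B 1) := by rw [hBv]; rfl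
      have h2 : v' 2 = B 2 := by rw [hBv]; rfl
      have h3 : v' 3 = B 3 := by rw [hBv]; rfl
      ext i j
      fin_cases j <;> fin_cases i <;>
        simp [Module.Basis.toMatrix_apply, hB'v, h0, h1, h2, h3, Matrix.vecHead, Matrix.vecTail,
          Finsupp.single_apply]
    have hdetneg : B.det ⇑B' = -1 := by
      rw [Module.Basis.det_apply, hM]
      simp [Matrix.det_succ_row_zero, Fin.sum_univ_succ, Matrix.det_fin_three]
    rw [hdetneg] at horient
    norm_num at horient
  · rintro (h | h)
    · rw [h, sub_self]
    · apply LinearMap.ext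
      intro x
      simp [h, hJm2]
end
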